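/- The binary MacWilliams identity: for a k-dimensional binary linear code C of length n and real (or complex) x, y, Σ_{u ∈ C^⊥} x^{n − wt(u)} y^{wt(u)} = (1/2^k) Σ_{u ∈ C} (x+y)^{n − wt(u)} (x−y)^{wt(u)}. -/

import Mathlib

open scoped Classical

/-- The dual code of a binary linear code `C ⊆ GF(2)^n`. -/
def dualCode {n : ℕ} (C : Submodule (ZMod 2) (Fin n → ZMod 2)) :
    Submodule (ZMod 2) (Fin n → ZMod 2) where
  carrier := {a | ∀ c ∈ C, ∑ i, a i * c i = 0}
  add_mem' := by
    intro a b ha hb c hc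
    simp only [Set.mem_setOf_eq] at *
    simp [add_mul, Finset.sum_add_distrib, ha c hc, hb c hc]
  zero_mem' := by simp
  smul_mem' := by
    intro r a ha c hc
    simp only [Set.mem_setOf_eq] at *
    simp [smul_eq_mul, mul_assoc, ← Finset.mul_sum, ha c hc]

/-- The finset of codewords of a binary linear code. -/
noncomputable def codewords {n : ℕ} (C : Submodule (ZMod 2) (Fin n → ZMod 2)) :
    Finset (Fin n → ZMod 2) :=
  Finset.univ.filter (fun c => c ∈ C)

/-- `A w`: the number of codewords of Hamming weight `w`. -/
noncomputable def weightDist {n : ℕ} (C : Submodule (ZMod 2) (Fin n → ZMod 2)) (w : ℕ) : ℕ :=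
  (Finset.univ.filter (fun c => c ∈ C ∧ hammingNorm c = w)).card

noncomputable def chi : ZMod 2 → ℝ := fun a => if a = 0 then 1 else -1

lemma chi_zero : chi 0 = 1 := by simp [chi]

lemma chi_add (a b : ZMod 2) : chi (a + b) = chi a * chi b := by
  have h : (1 + 1 : ZMod 2) = 0 := by decide
  rcases (by decide : ∀ a : ZMod 2, a = 0 ∨ a = 1) a with rfl | rfl <;>
    rcases (by decide : ∀ a : ZMod 2, a = 0 ∨ a = 1) b with rfl | rfl <;> simp [chi, h]

lemma chi_sum {ι : Type*} (s : Finset ι) (f : ι → ZMod 2) :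
    chi (∑ i ∈ s, f i) = ∏ i ∈ s, chi (f i) := by
  induction s using Finset.cons_induction with
  | empty => simp [chi]
  | cons a s ha ih => rw [Finset.sum_cons, Finset.prod_cons, chi_add, ih]

lemma sum_zmod2 (g : ZMod 2 → ℝ) : ∑ a, g a = g 0 + g 1 := by
  rw [show (Finset.univ : Finset (ZMod 2)) = {0, 1} by decide,
    Finset.sum_pair (by decide)]

lemma prod_ite_weight {n : ℕ} (u : Fin n → ZMod 2) (x y : ℝ) :
    ∏ i, (if u i = 0 then x else y) = x ^ (n - hammingNorm u) * y ^ (hammingNorm u) := by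
  rw [Finset.prod_ite, Finset.prod_const, Finset.prod_const]
  have hle : hammingNorm u ≤ n := by
    simpa [hammingNorm] using Finset.card_filter_le Finset.univ (fun i => u i ≠ 0)
  congr 2
  · have h := Finset.card_filter_add_card_filter_not
      (s := (Finset.univ : Finset (Fin n))) (p := fun i => u i = 0)
    simp only [Finset.card_univ, Fintype.card_fin] at h
    have : hammingNorm u = (Finset.univ.filter fun i => ¬ u i = 0).card := by
      simp [hammingNorm]
    omega

lemma mem_codewords {n : ℕ} {C : Submodule (ZMod 2) (Fin n → ZMod 2)}
    {v : Fin n → ZMod 2} : v ∈ codewords C ↔ v ∈ C := by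
  simp [codewords]

lemma char_sum {n : ℕ} (C : Submodule (ZMod 2) (Fin n → ZMod 2)) (u : Fin n → ZMod 2) :
    ∑ v ∈ codewords C, chi (∑ i, u i * v i)
      = if u ∈ dualCode C then ((codewords C).card : ℝ) else 0 := by
  have hone : ∀ a : ZMod 2, a ≠ 0 → a = 1 := by decide
  have haa : ∀ a : ZMod 2, a + a = 0 := by decide
  by_cases hu : u ∈ dualCode C
  · rw [if_pos hu,
      Finset.sum_congr rfl (fun v hv => by rw [hu v (mem_codewords.mp hv), chi_zero])]
    simp
  · rw [if_neg hu]
    have hex : ∃ c₀ ∈ C, ∑ i, u i * c₀ i ≠ 0 := by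
      by_contra h
      push_neg at h
      exact hu h
    obtain ⟨c₀, hc₀, hval⟩ := hex
    have hchi : chi (∑ i, u i * c₀ i) = -1 := by
      rw [hone _ hval]; simp [chi]
    have hmem : ∀ v : Fin n → ZMod 2, v ∈ codewords C ↔ v + c₀ ∈ codewords C := by
      intro v
      constructor
      · intro hv; exact mem_codewords.mpr (C.add_mem (mem_codewords.mp hv) hc₀)
      · intro hv
        have : v = (v + c₀) + c₀ := by
          funext i; simp [add_assoc, haa (c₀ i)]
        rw [this]
        exact mem_codewords.mpr (C.add_mem (mem_codewords.mp hv) hc₀)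
    have hre : ∑ v ∈ codewords C, chi (∑ i, u i * (v + c₀) i)
        = ∑ v ∈ codewords C, chi (∑ i, u i * v i) := by
      exact Finset.sum_equiv (Equiv.addRight c₀) (fun v => hmem v) (fun v _ => rfl)
    have hsplit : ∀ v : Fin n → ZMod 2,
        chi (∑ i, u i * (v + c₀) i) = - chi (∑ i, u i * v i) := by
      intro v
      have : (∑ i, u i * (v + c₀) i) = (∑ i, u i * v i) + ∑ i, u i * c₀ i := by
        simp [mul_add, Finset.sum_add_distrib]
      rw [this, chi_add, hchi]; ring
    have h2 : ∑ v ∈ codewords C, - chi (∑ i, u i * v i)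
        = ∑ v ∈ codewords C, chi (∑ i, u i * v i) := by
      rw [← hre]
      exact Finset.sum_congr rfl (fun v _ => (hsplit v).symm)
    rw [Finset.sum_neg_distrib] at h2
    linarith

lemma transform {n : ℕ} (v : Fin n → ZMod 2) (x y : ℝ) :
    (x + y) ^ (n - hammingNorm v) * (x - y) ^ (hammingNorm v)
      = ∑ u : Fin n → ZMod 2,
          chi (∑ i, u i * v i) * (x ^ (n - hammingNorm u) * y ^ (hammingNorm u)) := by
  have hgoal : ∀ i : Fin n,
      (∑ a : ZMod 2, chi (a * v i) * (if a = 0 then x else y))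
        = if v i = 0 then x + y else x - y := by
    intro i
    rw [sum_zmod2]
    by_cases h : v i = 0 <;> simp [h, chi] <;> ring
  calc (x + y) ^ (n - hammingNorm v) * (x - y) ^ (hammingNorm v)
      = ∏ i, (if v i = 0 then x + y else x - y) := (prod_ite_weight v _ _).symm
    _ = ∏ i, ∑ a : ZMod 2, chi (a * v i) * (if a = 0 then x else y) :=
        Finset.prod_congr rfl (fun i _ => (hgoal i).symm)
    _ = ∑ u : Fin n → ZMod 2, ∏ i, chi (u i * v i) * (if u i = 0 then x else y) :=
        Fintype.prod_sum _
    _ = ∑ u : Fin n → ZMod 2,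
          chi (∑ i, u i * v i) * (x ^ (n - hammingNorm u) * y ^ (hammingNorm u)) :=
        Finset.sum_congr rfl (fun u _ => by
          rw [Finset.prod_mul_distrib, ← chi_sum, prod_ite_weight])

lemma card_codewords {n k : ℕ} (C : Submodule (ZMod 2) (Fin n → ZMod 2))
    (hk : Module.finrank (ZMod 2) C = k) : (codewords C).card = 2 ^ k := by
  have h1 : (codewords C).card = Fintype.card C := by
    rw [codewords, ← Fintype.card_subtype]
  rw [h1, Module.card_eq_pow_finrank (K := ZMod 2), ZMod.card, hk]
theorem macwilliams_identity (n k : ℕ) (C : Submodule (ZMod 2) (Fin n → ZMod 2))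
    (hk : Module.finrank (ZMod 2) C = k) (x y : ℝ) :
    ∑ u ∈ codewords (dualCode C), x ^ (n - hammingNorm u) * y ^ (hammingNorm u)
      = (1 / 2 ^ k : ℝ) *
          ∑ u ∈ codewords C, (x + y) ^ (n - hammingNorm u) * (x - y) ^ (hammingNorm u) := by
  have hcard : ((codewords C).card : ℝ) = 2 ^ k := by
    rw [card_codewords C hk]; push_cast; ring
  have key : ∑ u ∈ codewords C, (x + y) ^ (n - hammingNorm u) * (x - y) ^ (hammingNorm u)
      = (2 ^ k : ℝ) * ∑ u ∈ codewords (dualCode C),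
          x ^ (n - hammingNorm u) * y ^ (hammingNorm u) := by
    calc ∑ v ∈ codewords C, (x + y) ^ (n - hammingNorm v) * (x - y) ^ (hammingNorm v)
        = ∑ v ∈ codewords C, ∑ u : Fin n → ZMod 2,
            chi (∑ i, u i * v i) * (x ^ (n - hammingNorm u) * y ^ (hammingNorm u)) :=
          Finset.sum_congr rfl (fun v _ => transform v x y)
      _ = ∑ u : Fin n → ZMod 2, ∑ v ∈ codewords C,
            chi (∑ i, u i * v i) * (x ^ (n - hammingNorm u) * y ^ (hammingNorm u)) :=
          Finset.sum_comm
      _ = ∑ u : Fin n → ZMod 2,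
            (if u ∈ dualCode C then ((codewords C).card : ℝ) else 0) *
              (x ^ (n - hammingNorm u) * y ^ (hammingNorm u)) := by
          refine Finset.sum_congr rfl (fun u _ => ?_)
          rw [← Finset.sum_mul, char_sum]
      _ = ∑ u ∈ codewords (dualCode C),
            ((codewords C).card : ℝ) * (x ^ (n - hammingNorm u) * y ^ (hammingNorm u)) := by
          rw [show codewords (dualCode C)
              = Finset.univ.filter (fun c => c ∈ dualCode C) from rfl, Finset.sum_filter]
          exact Finset.sum_congr rfl (fun u _ => by rw [ite_mul, zero_mul])
      _ = (2 ^ k : ℝ) * ∑ u ∈ codewords (dualCode C),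
            x ^ (n - hammingNorm u) * y ^ (hammingNorm u) := by
          rw [← Finset.mul_sum, hcard]
  rw [key]
  have h2 : (2 : ℝ) ^ k ≠ 0 := by positivity
  field_simp
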